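/- Let f : [q]^n → [q] be fair (commutes with every permutation of the alphabet applied to all coordinates and to the output) and monotone, and let μ^s be a probability measure on [q] for which μ^s(i) = max_{j≠i} μ^s(j) and μ^s is exchangeable among the maximizing symbols in the appropriate sense (specifically μ^s(i) ≥ μ^s(j) for all j). Then P_{(μ^s)^{⊗n}}[f = i] ≥ 1/q. -/

import Mathlib

open Finset

/-- Let `f : [q]^n → [q]` be fair (commuting with every permutation of the
alphabet) and monotone, and let `μ` be a probability measure on `[q]` with
`μ(i) ≥ μ(j)` for all `j`. Then `P_{μ^{⊗n}}[f = i] ≥ 1/q`. -/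
theorem fair_monotone_prob_ge (q n : ℕ) (hq : 0 < q)
    (f : (Fin n → Fin q) → Fin q)
    (hfair : ∀ σ : Equiv.Perm (Fin q), ∀ x : Fin n → Fin q,
      f (fun k => σ (x k)) = σ (f x))
    (hmono : ∀ (a : Fin q) (x y : Fin n → Fin q),
      (∀ k, y k = x k ∨ y k = a) → f x = a → f y = a)
    (i : Fin q) (μ : Fin q → ℝ)
    (hμ0 : ∀ j, 0 ≤ μ j) (hμ1 : ∑ j, μ j = 1)
    (hmax : ∀ j, μ j ≤ μ i) :
    (1 : ℝ) / q ≤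
      ∑ x ∈ Finset.univ.filter (fun x : Fin n → Fin q => f x = i), ∏ k, μ (x k) := by
  classical
  set P : Fin q → ℝ := fun j =>
    ∑ x ∈ Finset.univ.filter (fun x : Fin n → Fin q => f x = j), ∏ k, μ (x k) with hPdef
  have hPif : ∀ j, P j = ∑ x : Fin n → Fin q, if f x = j then ∏ k, μ (x k) else 0 := by
    intro j
    rw [hPdef]
    simp [Finset.sum_filter]
  have key : ∀ j, P j ≤ P i := by
    intro j
    by_cases hij : j = i
    · exact le_of_eq (by rw [hij])
    have hij' : i ≠ j := fun h => hij h.symm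
    set σ : Equiv.Perm (Fin q) := Equiv.swap i j with hσ
    -- the coupling
    set ν : Fin q → Fin q → ℝ := fun a b =>
      (if b = a then (if a = i then μ j else μ a) else 0) +
      (if a = i ∧ b = j then μ i - μ j else 0) with hν
    have hν0 : ∀ a b, 0 ≤ ν a b := by
      intro a b
      have h1 : (0:ℝ) ≤ μ i - μ j := sub_nonneg.mpr (hmax j)
      apply add_nonneg <;> split_ifs <;> first | exact hμ0 _ | exact h1 | exact le_refl 0
    have hrow : ∀ a, ∑ b, ν a b = μ a := by
      intro a
      rw [hν]
      by_cases ha : a = i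
      · subst ha
        simp [Finset.sum_add_distrib, Finset.sum_ite_eq]
      · simp [Finset.sum_add_distrib, Finset.sum_ite_eq, ha]
    have hcol : ∀ b, ∑ a, ν a b = μ (σ b) := by
      intro b
      rw [hν]
      by_cases hb : b = i
      · subst hb
        simp [Finset.sum_add_distrib, Finset.sum_ite_eq, hσ, Equiv.swap_apply_left, hij',
          Ne.symm hij']
      · by_cases hb' : b = j
        · subst hb'
          simp only [Finset.sum_add_distrib, hσ, Equiv.swap_apply_right, and_true,
            eq_self_iff_true, Finset.sum_ite_eq, Finset.sum_ite_eq', Finset.mem_univ,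
            if_true]
          simp [hij, Ne.symm hij']
        · simp [Finset.sum_add_distrib, Finset.sum_ite_eq, hσ,
            Equiv.swap_apply_of_ne_of_ne hb hb', hb, hb']
    have hsupp : ∀ a b, ν a b ≠ 0 → a = b ∨ a = i := by
      intro a b h
      by_contra hcon
      push_neg at hcon
      apply h
      rw [hν]
      simp [Ne.symm hcon.1, hcon.2]
    -- P j rewritten via the swap
    have hstep1 : P j = ∑ x : Fin n → Fin q, if f x = i then ∏ k, μ (σ (x k)) else 0 := by
      rw [hPif j]
      refine (Fintype.sum_equiv (Equiv.arrowCongr (Equiv.refl (Fin n)) σ)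
        (fun x => if f x = i then ∏ k, μ (σ (x k)) else 0)
        (fun x => if f x = j then ∏ k, μ (x k) else 0) ?_).symm
      intro x
      have he : ∀ k, (Equiv.arrowCongr (Equiv.refl (Fin n)) σ) x k = σ (x k) := by
        intro k; simp
      have hfx : f ((Equiv.arrowCongr (Equiv.refl (Fin n)) σ) x) = σ (f x) := by
        rw [show ((Equiv.arrowCongr (Equiv.refl (Fin n)) σ) x) = fun k => σ (x k) from
          funext he]
        exact hfair σ x
      by_cases hx : f x = i
      · have : σ (f x) = j := by rw [hx, hσ]; exact Equiv.swap_apply_left i j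
        rw [hfx, this]
        simp [hx, he]
      · have : σ (f x) ≠ j := by
          intro hh
          apply hx
          have := σ.injective (hh.trans (Equiv.swap_apply_left i j).symm)
          exact this
        simp [hx, hfx, this]
    rw [hstep1, hPif i]
    -- expand both sides via the coupling
    have hpull : ∀ (c : Prop) [Decidable c] (g : (Fin n → Fin q) → ℝ),
        (if c then ∑ z, g z else 0) = ∑ z, if c then g z else 0 := by
      intro c _ g
      split_ifs <;> simp
    have hexpL : ∀ x : Fin n → Fin q,
        (∏ k, μ (σ (x k))) = ∑ z : Fin n → Fin q, ∏ k, ν (z k) (x k) := by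
      intro x
      have : (∏ k, μ (σ (x k))) = ∏ k, ∑ a, ν a (x k) := by
        refine Finset.prod_congr rfl fun k _ => (hcol (x k)).symm
      rw [this, Finset.prod_univ_sum, Fintype.piFinset_univ]
    have hexpR : ∀ z : Fin n → Fin q,
        (∏ k, μ (z k)) = ∑ x : Fin n → Fin q, ∏ k, ν (z k) (x k) := by
      intro z
      have : (∏ k, μ (z k)) = ∏ k, ∑ b, ν (z k) b := by
        refine Finset.prod_congr rfl fun k _ => (hrow (z k)).symm
      rw [this, Finset.prod_univ_sum, Fintype.piFinset_univ]
    calc ∑ x : Fin n → Fin q, (if f x = i then ∏ k, μ (σ (x k)) else 0)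
        = ∑ x : Fin n → Fin q, ∑ z : Fin n → Fin q,
            (if f x = i then ∏ k, ν (z k) (x k) else 0) := by
          refine Finset.sum_congr rfl fun x _ => ?_
          rw [hexpL x, hpull]
      _ ≤ ∑ x : Fin n → Fin q, ∑ z : Fin n → Fin q,
            (if f z = i then ∏ k, ν (z k) (x k) else 0) := by
          refine Finset.sum_le_sum fun x _ => Finset.sum_le_sum fun z _ => ?_
          have hprod : (0:ℝ) ≤ ∏ k, ν (z k) (x k) :=
            Finset.prod_nonneg fun k _ => hν0 _ _
          by_cases hx : f x = i
          · by_cases hz : f z = i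
            · simp [hx, hz]
            · have hzero : (∏ k, ν (z k) (x k)) = 0 := by
                by_contra hne
                have hall := Finset.prod_ne_zero_iff.mp hne
                have hcond : ∀ k, z k = x k ∨ z k = i := fun k =>
                  hsupp _ _ (hall k (Finset.mem_univ k))
                exact hz (hmono i x z hcond hx)
              simp [hx, hz, hzero]
          · by_cases hz : f z = i
            · simp only [hx, if_false, hz, if_true]
              exact hprod
            · simp [hx, hz]
      _ = ∑ z : Fin n → Fin q, ∑ x : Fin n → Fin q,
            (if f z = i then ∏ k, ν (z k) (x k) else 0) := Finset.sum_comm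
      _ = ∑ z : Fin n → Fin q, (if f z = i then ∏ k, μ (z k) else 0) := by
          refine Finset.sum_congr rfl fun z _ => ?_
          rw [hexpR z, hpull]
  -- summing over all fibers gives 1
  have hsum : ∑ j, P j = 1 := by
    have h1 : ∑ j, P j = ∑ x : Fin n → Fin q, ∏ k, μ (x k) := by
      rw [hPdef]
      exact Finset.sum_fiberwise_of_maps_to (fun x _ => Finset.mem_univ (f x)) _
    rw [h1, ← Fintype.piFinset_univ, ← Finset.prod_univ_sum]
    simp [hμ1]
  have hfin : 1 ≤ (q : ℝ) * P i := by
    calc (1:ℝ) = ∑ j, P j := hsum.symm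
      _ ≤ ∑ _j : Fin q, P i := Finset.sum_le_sum fun j _ => key j
      _ = (q : ℝ) * P i := by simp [mul_comm]
  rw [div_le_iff₀ (by positivity : (0:ℝ) < (q:ℝ))]
  linarith [hfin]
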